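/- arXiv:1410.5207 — 2 statements merged into one kernel-verified Lean document; each statement's English description precedes it below -/
import Mathlib

section
/- In the ring of formal power series over a field, the coefficient of t^n in 1/((1-t)^2 (1-t^2)) equals ⌊(n+2)^2/4⌋ for all natural numbers n. -/
open PowerSeries

lemma aux_nat (m : ℕ) :
    (m + 6) ^ 2 / 4 + 2 * ((m + 3) ^ 2 / 4) = 2 * ((m + 5) ^ 2 / 4) + (m + 2) ^ 2 / 4 := by
  rcases Nat.even_or_odd m with ⟨s, rfl⟩ | ⟨s, rfl⟩
  · have e1 : (s + s + 6) ^ 2 / 4 = (s + 3) ^ 2 := by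
      rw [show (s + s + 6) ^ 2 = (s + 3) ^ 2 * 4 by ring, Nat.mul_div_cancel _ (by norm_num)]
    have e2 : (s + s + 3) ^ 2 / 4 = s ^ 2 + 3 * s + 2 := by
      rw [show (s + s + 3) ^ 2 = (s ^ 2 + 3 * s + 2) * 4 + 1 by ring]
      omega
    have e3 : (s + s + 5) ^ 2 / 4 = s ^ 2 + 5 * s + 6 := by
      rw [show (s + s + 5) ^ 2 = (s ^ 2 + 5 * s + 6) * 4 + 1 by ring]
      omega
    have e4 : (s + s + 2) ^ 2 / 4 = (s + 1) ^ 2 := by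
      rw [show (s + s + 2) ^ 2 = (s + 1) ^ 2 * 4 by ring, Nat.mul_div_cancel _ (by norm_num)]
    rw [e1, e2, e3, e4]; ring
  · have e1 : (2 * s + 1 + 6) ^ 2 / 4 = s ^ 2 + 7 * s + 12 := by
      rw [show (2 * s + 1 + 6) ^ 2 = (s ^ 2 + 7 * s + 12) * 4 + 1 by ring]; omega
    have e2 : (2 * s + 1 + 3) ^ 2 / 4 = (s + 2) ^ 2 := by
      rw [show (2 * s + 1 + 3) ^ 2 = (s + 2) ^ 2 * 4 by ring, Nat.mul_div_cancel _ (by norm_num)]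
    have e3 : (2 * s + 1 + 5) ^ 2 / 4 = (s + 3) ^ 2 := by
      rw [show (2 * s + 1 + 5) ^ 2 = (s + 3) ^ 2 * 4 by ring, Nat.mul_div_cancel _ (by norm_num)]
    have e4 : (2 * s + 1 + 2) ^ 2 / 4 = s ^ 2 + 3 * s + 2 := by
      rw [show (2 * s + 1 + 2) ^ 2 = (s ^ 2 + 3 * s + 2) * 4 + 1 by ring]; omega
    rw [e1, e2, e3, e4]; ring

/-- The coefficient of `tⁿ` in the Hilbert series `1/((1-t)²(1-t²))` of a cubic
3-dimensional AS-regular algebra is `⌊(n+2)²/4⌋`. -/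
theorem stmt_3 (k : Type*) [Field k] (n : ℕ) :
    PowerSeries.coeff n
        ((((1 - PowerSeries.X) ^ 2) * (1 - PowerSeries.X ^ 2))⁻¹ : PowerSeries k) =
      (((n + 2) ^ 2 / 4 : ℕ) : k) := by
  set g : PowerSeries k := PowerSeries.mk (fun n => (((n + 2) ^ 2 / 4 : ℕ) : k)) with hg
  have hc : constantCoeff (((1 - X) ^ 2) * (1 - X ^ 2) : PowerSeries k) ≠ 0 := by
    simp
  have key : ((((1 - X) ^ 2) * (1 - X ^ 2) : PowerSeries k))⁻¹ = g := by
    rw [PowerSeries.inv_eq_iff_mul_eq_one hc]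
    have hP : (((1 - X) ^ 2) * (1 - X ^ 2) : PowerSeries k)
        = 1 - 2 * X + 2 * X ^ 3 - X ^ 4 := by ring
    rw [hP]
    ext m
    rw [show (g * (1 - 2 * X + 2 * X ^ 3 - X ^ 4 : PowerSeries k))
        = g - X * g - X * g + X ^ 3 * g + X ^ 3 * g - X ^ 4 * g by ring]
    simp only [map_sub, map_add]
    match m with
    | 0 => simp [hg]
    | 1 =>
        rw [show (1 : ℕ) = 0 + 1 from rfl, PowerSeries.coeff_succ_X_mul]
        simp [hg, PowerSeries.coeff_X_pow_mul']
        norm_num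
    | 2 =>
        rw [show (2 : ℕ) = 1 + 1 from rfl, PowerSeries.coeff_succ_X_mul]
        simp [hg, PowerSeries.coeff_X_pow_mul']
        norm_num
    | 3 =>
        rw [show (3 : ℕ) = 2 + 1 from rfl, PowerSeries.coeff_succ_X_mul,
          show (2 + 1 : ℕ) = 0 + 3 from rfl, PowerSeries.coeff_X_pow_mul]
        simp [hg, PowerSeries.coeff_X_pow_mul']
        norm_num
    | (m + 4) =>
        rw [show (m + 4 : ℕ) = (m + 3) + 1 from rfl, PowerSeries.coeff_succ_X_mul,
          show (m + 3 + 1 : ℕ) = (m + 1) + 3 from rfl, PowerSeries.coeff_X_pow_mul,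
          show (m + 1 + 3 : ℕ) = m + 4 from rfl,
          show (m + 4 : ℕ) = m + 4 from rfl, PowerSeries.coeff_X_pow_mul]
        simp only [hg, PowerSeries.coeff_mk, PowerSeries.coeff_one, Nat.add_eq_zero,
          OfNat.ofNat_ne_zero, and_false, if_false]
        have := aux_nat m
        have hcast : ((((m + 4) + 2) ^ 2 / 4 : ℕ) : k) + 2 * ((((m + 1) + 2) ^ 2 / 4 : ℕ) : k)
            = 2 * ((((m + 3) + 2) ^ 2 / 4 : ℕ) : k) + (((m + 2) ^ 2 / 4 : ℕ) : k) := by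
          rw_mod_cast [show m + 4 + 2 = m + 6 by ring, show m + 1 + 2 = m + 3 by ring,
            show m + 3 + 2 = m + 5 by ring]
          exact_mod_cast congrArg (Nat.cast : ℕ → k) this
        linear_combination hcast
  rw [key, hg, PowerSeries.coeff_mk]
end

section
/- Let R be a ℤ-graded ring which is a 'graded field': every nonzero homogeneous element is invertible. Suppose there exists a nonzero element t of degree 1. Then R₀ is a division ring, t is a unit, and for every n ∈ ℤ the map R₀ → Rₙ, a ↦ a·tⁿ, is a bijection; moreover conjugation α(a) = t·a·t⁻¹ defines a ring automorphism of R₀ (so R ≅ R₀[t, t⁻¹; α] as graded rings). -/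
open DirectSum

/-- In a graded ring, the inverse of a homogeneous unit is homogeneous of the
opposite degree. -/
lemma aux_inv_mem {R : Type*} [Ring R] (𝒜 : ℤ → AddSubgroup R) [GradedRing 𝒜]
    (x : Rˣ) (n : ℤ) (hx : (x : R) ∈ 𝒜 n) : ((x⁻¹ : Rˣ) : R) ∈ 𝒜 (-n) := by
  have key : ((DirectSum.decompose 𝒜 ((x : R) * ((x⁻¹ : Rˣ) : R)) (n + (-n)) : 𝒜 (n + (-n))) : R)
      = (x : R) * ((DirectSum.decompose 𝒜 ((x⁻¹ : Rˣ) : R) (-n) : 𝒜 (-n)) : R) :=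
    DirectSum.coe_decompose_mul_add_of_left_mem 𝒜 hx
  have hx1 : (x : R) * ((x⁻¹ : Rˣ) : R) = 1 := x.mul_inv
  rw [hx1] at key
  have h1 : ((DirectSum.decompose 𝒜 (1 : R) (n + (-n)) : 𝒜 (n + (-n))) : R) = 1 := by
    have : (n : ℤ) + (-n) = 0 := by omega
    rw [this]
    exact DirectSum.decompose_of_mem_same 𝒜 (SetLike.one_mem_graded 𝒜)
  rw [h1] at key
  have : ((x⁻¹ : Rˣ) : R) = ((DirectSum.decompose 𝒜 ((x⁻¹ : Rˣ) : R) (-n) : 𝒜 (-n)) : R) := by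
    calc ((x⁻¹ : Rˣ) : R) = ((x⁻¹ : Rˣ) : R) * 1 := (mul_one _).symm
    _ = ((x⁻¹ : Rˣ) : R) * ((x : R) * ((DirectSum.decompose 𝒜 ((x⁻¹ : Rˣ) : R) (-n) : 𝒜 (-n)) : R)) := by
        rw [← key]
    _ = (((x⁻¹ : Rˣ) : R) * (x : R)) * ((DirectSum.decompose 𝒜 ((x⁻¹ : Rˣ) : R) (-n) : 𝒜 (-n)) : R) := by
        rw [mul_assoc]
    _ = ((DirectSum.decompose 𝒜 ((x⁻¹ : Rˣ) : R) (-n) : 𝒜 (-n)) : R) := by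
        rw [x.inv_mul, one_mul]
  rw [this]
  exact SetLike.coe_mem _

lemma aux_zpow_mem {R : Type*} [Ring R] (𝒜 : ℤ → AddSubgroup R) [GradedRing 𝒜]
    (x : Rˣ) (hx : (x : R) ∈ 𝒜 1) (n : ℤ) : ((x ^ n : Rˣ) : R) ∈ 𝒜 n := by
  have hinv : ((x⁻¹ : Rˣ) : R) ∈ 𝒜 (-1) := aux_inv_mem 𝒜 x 1 hx
  induction n using Int.induction_on with
  | zero => simpa using SetLike.one_mem_graded 𝒜
  | succ k ih =>
      have : (x ^ ((k : ℤ) + 1) : Rˣ) = x ^ (k : ℤ) * x := by rw [zpow_add_one]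
      rw [this, Units.val_mul]
      exact SetLike.mul_mem_graded ih hx
  | pred k ih =>
      have : (x ^ (-(k : ℤ) - 1) : Rˣ) = x ^ (-(k : ℤ)) * x⁻¹ := by
        rw [zpow_sub_one]
      rw [this, Units.val_mul]
      have := SetLike.mul_mem_graded ih hinv
      convert this using 2
      omega

/-- Structure theorem for graded division rings (Năstăsescu–Van Oystaeyen):
if `R = ⊕ₙ Rₙ` is a ℤ-graded ring in which every nonzero homogeneous element is
invertible, and `t ∈ R₁` is nonzero, then `R₀` is a division ring, `t` is a
unit, every homogeneous element of degree `n` is uniquely of the form `a·tⁿ`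
with `a ∈ R₀`, and conjugation by `t` is a ring automorphism of `R₀`
(so `R ≅ R₀[t, t⁻¹; α]`). -/
theorem stmt_12 {R : Type*} [Ring R] (𝒜 : ℤ → AddSubgroup R) [GradedRing 𝒜]
    (hfield : ∀ (n : ℤ) (r : R), r ∈ 𝒜 n → r ≠ 0 → IsUnit r)
    (t : R) (ht : t ∈ 𝒜 1) (ht0 : t ≠ 0) :
    (∀ a ∈ 𝒜 0, a ≠ 0 → ∃ b ∈ 𝒜 0, a * b = 1 ∧ b * a = 1) ∧
    ∃ u : Rˣ, (u : R) = t ∧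
      (∀ n : ℤ, ∀ r ∈ 𝒜 n, ∃! a : R, a ∈ 𝒜 0 ∧ r = a * ((u ^ n : Rˣ) : R)) ∧
      (∀ a ∈ 𝒜 0, (u : R) * a * ((u⁻¹ : Rˣ) : R) ∈ 𝒜 0) ∧
      (∀ a b : R,
        (u : R) * (a * b) * ((u⁻¹ : Rˣ) : R) =
          ((u : R) * a * ((u⁻¹ : Rˣ) : R)) * ((u : R) * b * ((u⁻¹ : Rˣ) : R))) := by
  constructor
  · -- R₀ is a division ring
    intro a ha ha0
    obtain ⟨v, hv⟩ := hfield 0 a ha ha0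
    refine ⟨((v⁻¹ : Rˣ) : R), ?_, ?_, ?_⟩
    · have := aux_inv_mem 𝒜 v 0 (hv ▸ ha)
      simpa using this
    · rw [← hv]; exact v.mul_inv
    · rw [← hv]; exact v.inv_mul
  · obtain ⟨u, hu⟩ := hfield 1 t ht ht0
    have hut : (u : R) ∈ 𝒜 1 := hu ▸ ht
    have huinv : ((u⁻¹ : Rˣ) : R) ∈ 𝒜 (-1) := aux_inv_mem 𝒜 u 1 hut
    refine ⟨u, hu, ?_, ?_, ?_⟩
    · intro n r hr
      refine ⟨r * ((u ^ (-n) : Rˣ) : R), ⟨?_, ?_⟩, ?_⟩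
      · have := SetLike.mul_mem_graded hr (aux_zpow_mem 𝒜 u hut (-n))
        simpa using this
      · have : ((u ^ (-n) : Rˣ) : R) * ((u ^ n : Rˣ) : R) = 1 := by
          rw [← Units.val_mul, ← zpow_add]; simp
        rw [mul_assoc, this, mul_one]
      · rintro a ⟨ha, rfl⟩
        have : ((u ^ n : Rˣ) : R) * ((u ^ (-n) : Rˣ) : R) = 1 := by
          rw [← Units.val_mul, ← zpow_add]; simp
        rw [mul_assoc, this, mul_one]
    · intro a ha
      have h1 := SetLike.mul_mem_graded (SetLike.mul_mem_graded hut ha) huinv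
      simpa using h1
    · intro a b
      have : ((u⁻¹ : Rˣ) : R) * ((u : R)) = 1 := u.inv_mul
      calc (u : R) * (a * b) * ((u⁻¹ : Rˣ) : R)
          = (u : R) * a * (((u⁻¹ : Rˣ) : R) * (u : R)) * b * ((u⁻¹ : Rˣ) : R) := by
            rw [this]; noncomm_ring
        _ = ((u : R) * a * ((u⁻¹ : Rˣ) : R)) * ((u : R) * b * ((u⁻¹ : Rˣ) : R)) := by noncomm_ring
end
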